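/- arXiv:2510.04497 — 6 statements merged into one kernel-verified Lean document; each statement's English description precedes it below -/
import Mathlib

section
/- Let G be a finite group and K a subgroup. The Hecke algebra H(G,K) = ε_K ℂ[G] ε_K is commutative (i.e. ab = ba for all a, b ∈ ε_K ℂ[G] ε_K) if and only if dim V^K ≤ 1 for every irreducible complex representation V of G. -/
open CategoryTheory

/-- The idempotent `ε_K = (1/|K|) ∑_{k ∈ K} 1_k` in the group algebra `ℂ[G]`.
The Hecke algebra `H(G,K)` is the set of elements `ε_K a ε_K` for `a ∈ ℂ[G]`. -/
noncomputable def heckeIdem {G : Type} [Group G] [Fintype G] (K : Subgroup G) :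
    MonoidAlgebra ℂ G :=
  haveI : Fintype K := Fintype.ofFinite K
  (Nat.card K : ℂ)⁻¹ • ∑ k : K, MonoidAlgebra.single (k : G) (1 : ℂ)

namespace HeckeAux

open Representation MonoidAlgebra Module

set_option linter.unusedSectionVars false
set_option linter.unusedVariables false


open Representation MonoidAlgebra Module

variable {G : Type} [Group G] [Fintype G]

lemma natCard_ne_zero (K : Subgroup G) : (Nat.card K : ℂ) ≠ 0 := by
  exact_mod_cast (Nat.card_pos (α := K)).ne'

section RepLemmas

variable (K : Subgroup G) {V : Type*} [AddCommGroup V] [Module ℂ V]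
  (ρ : Representation ℂ G V)

lemma hecke_apply (v : V) :
    letI : Fintype K := Fintype.ofFinite K
    asAlgebraHom ρ (heckeIdem K) v = (Nat.card K : ℂ)⁻¹ • ∑ k : K, ρ (k : G) v := by
  letI : Fintype K := Fintype.ofFinite K
  rw [heckeIdem]
  simp [asAlgebraHom_single]

lemma hecke_mem_invariants (v : V) :
    asAlgebraHom ρ (heckeIdem K) v ∈
      Representation.invariants (k := ℂ) (G := K) (MonoidHom.comp ρ K.subtype) := by
  letI : Fintype K := Fintype.ofFinite K
  rw [mem_invariants]
  intro k₀
  rw [hecke_apply]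
  simp only [MonoidHom.comp_apply, Subgroup.coe_subtype, map_smul, map_sum]
  congr 1
  have : ∀ k : K, ρ (k₀ : G) (ρ (k : G) v) = ρ ((k₀ * k : K) : G) v := by
    intro k; simp [map_mul]
  calc ∑ k : K, ρ (k₀ : G) (ρ (k : G) v) = ∑ k : K, ρ ((k₀ * k : K) : G) v :=
        Finset.sum_congr rfl fun k _ => this k
    _ = ∑ k : K, ρ (k : G) v :=
        Fintype.sum_equiv (Equiv.mulLeft k₀) _ _ (fun k => rfl)

lemma hecke_apply_invariant (v : V)
    (hv : v ∈ Representation.invariants (k := ℂ) (G := K) (MonoidHom.comp ρ K.subtype)) :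
    asAlgebraHom ρ (heckeIdem K) v = v := by
  letI : Fintype K := Fintype.ofFinite K
  rw [mem_invariants] at hv
  rw [hecke_apply]
  have : ∀ k : K, ρ (k : G) v = v := fun k => hv k
  simp only [this, Finset.sum_const, Finset.card_univ, smul_smul]
  rw [Nat.card_eq_fintype_card, ← Nat.cast_smul_eq_nsmul ℂ, smul_smul,
    inv_mul_cancel₀ (by exact_mod_cast Fintype.card_ne_zero), one_smul]

end RepLemmas


lemma proj_scalar {V : Type*} [AddCommGroup V] [Module ℂ V] [FiniteDimensional ℂ V]
    (W : Submodule ℂ V) (hW : Module.finrank ℂ W ≤ 1) (p f : V →ₗ[ℂ] V)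
    (hmem : ∀ v, p v ∈ W) (hid : ∀ w ∈ W, p w = w) :
    ∃ c : ℂ, ∀ v, p (f (p v)) = c • p v := by
  have hprin : W.IsPrincipal := (Submodule.finrank_le_one_iff_isPrincipal W).1 hW
  obtain ⟨w₀, hw₀⟩ := hprin
  have hmem' : ∀ v, p v ∈ Submodule.span ℂ {w₀} := fun v => hw₀ ▸ hmem v
  obtain ⟨c, hc⟩ := Submodule.mem_span_singleton.1 (hmem' (f w₀))
  refine ⟨c, fun v => ?_⟩
  obtain ⟨t, ht⟩ := Submodule.mem_span_singleton.1 (hmem' v)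
  have h1 : p (f (p v)) = t • p (f w₀) := by rw [← ht, map_smul, map_smul]
  rw [h1, ← hc, ← ht, smul_comm]

lemma proj_comm {V : Type*} [AddCommGroup V] [Module ℂ V] [FiniteDimensional ℂ V]
    (W : Submodule ℂ V) (hW : Module.finrank ℂ W ≤ 1) (p f g : V →ₗ[ℂ] V)
    (hmem : ∀ v, p v ∈ W) (hid : ∀ w ∈ W, p w = w) :
    (p * f * p) * (p * g * p) = (p * g * p) * (p * f * p) := by
  obtain ⟨cf, hcf⟩ := proj_scalar W hW p f hmem hid
  obtain ⟨cg, hcg⟩ := proj_scalar W hW p g hmem hid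
  have hpp : ∀ v, p (p v) = p v := fun v => hid _ (hmem v)
  have key : ∀ (u w : V →ₗ[ℂ] V) (cu cw : ℂ),
      (∀ v, p (u (p v)) = cu • p v) → (∀ v, p (w (p v)) = cw • p v) →
      ∀ v, p (u (p (p (w (p v))))) = (cu * cw) • p v := by
    intro u w cu cw hu hw v
    calc p (u (p (p (w (p v))))) = p (u (p (w (p v)))) := by rw [hpp]
      _ = p (u (cw • p v)) := by rw [hw]
      _ = cw • p (u (p v)) := by simp only [map_smul]
      _ = cw • (cu • p v) := by rw [hu]
      _ = (cu * cw) • p v := by rw [smul_smul, mul_comm]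
  ext v
  simp only [Module.End.mul_apply]
  rw [key f g cf cg hcf hcg v, key g f cg cf hcg hcf v, mul_comm]

/-- A `G`-stable subspace. -/
def Stable (X : FDRep ℂ G) (N : Submodule ℂ X) : Prop :=
  ∀ (g : G), ∀ v ∈ N, X.ρ g v ∈ N

/-- The subrepresentation on a stable subspace. -/
noncomputable def subRep (X : FDRep ℂ G) (N : Submodule ℂ X) (hN : Stable X N) :
    FDRep ℂ G :=
  FDRep.of
    { toFun := fun g => (X.ρ g).restrict (fun v hv => hN g v hv)
      map_one' := by ext v; simp [LinearMap.restrict_apply]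
      map_mul' := fun g h => by ext v; simp [LinearMap.restrict_apply] }

/-- The inclusion of a subrepresentation. -/
noncomputable def subRepι (X : FDRep ℂ G) (N : Submodule ℂ X) (hN : Stable X N) :
    subRep X N hN ⟶ X :=
  ⟨ConcreteCategory.ofHom N.subtype, fun g => by ext v; rfl⟩

lemma subRepι_hom_apply (X : FDRep ℂ G) (N : Submodule ℂ X) (hN : Stable X N)
    (v : N) : (subRepι X N hN).hom v = (v : X) := rfl

lemma nontrivial_of_simple (X : FDRep ℂ G) [Simple X] : ∃ v : X, v ≠ 0 := by
  by_contra h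
  push_neg at h
  apply id_nonzero X
  ext v
  exact h v

lemma stable_eq_bot_or_top_of_simple (X : FDRep ℂ G) [Simple X]
    (N : Submodule ℂ X) (hN : Stable X N) : N = ⊥ ∨ N = ⊤ := by
  by_cases hbot : N = ⊥
  · exact Or.inl hbot
  right
  obtain ⟨n, hn, hn0⟩ := Submodule.exists_mem_ne_zero_of_ne_bot hbot
  set ι := subRepι X N hN
  have hmono : Mono ι := ConcreteCategory.mono_of_injective ι N.injective_subtype
  have hne : ι ≠ 0 := by
    intro h0
    apply hn0
    have : ι.hom ⟨n, hn⟩ = 0 := by rw [h0]; rfl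
    exact this
  have hiso : IsIso ι := (Simple.mono_isIso_iff_nonzero ι).2 hne
  rw [eq_top_iff]
  intro v _
  have : ι.hom ((inv ι).hom v) = v := by
    have h := IsIso.inv_hom_id ι
    calc ι.hom ((inv ι).hom v) = ((inv ι) ≫ ι).hom v := rfl
      _ = v := by rw [h]; rfl
  rw [← this]
  exact (((inv ι).hom v) : N).2

lemma simple_of_stable (X : FDRep ℂ G) (hnt : ∃ v : X, v ≠ 0)
    (h : ∀ N : Submodule ℂ X, Stable X N → N = ⊥ ∨ N = ⊤) : Simple X := by
  constructor
  intro Y f hmono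
  constructor
  · intro hiso h0
    obtain ⟨v, hv⟩ := hnt
    apply hv
    have h1 : (𝟙 X : X ⟶ X) = inv f ≫ f := (IsIso.inv_hom_id f).symm
    have h2 : v = f.hom ((inv f).hom v) := congrArg (fun (q : X ⟶ X) => q.hom v) h1
    rw [h2]
    exact (congrArg (fun (q : Y ⟶ X) => q.hom ((inv f).hom v)) h0).trans rfl
  · intro hne
    -- f is injective
    have hcomm : ∀ (g : G) (y : Y), f.hom (Y.ρ g y) = X.ρ g (f.hom y) := by
      intro g y
      have := f.comm g
      exact congrArg (fun (q : Y.V ⟶ X.V) => q y) this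
    have hker : LinearMap.ker f.hom.hom.hom = ⊥ := by
      by_contra hk
      obtain ⟨y, hy, hy0⟩ := Submodule.exists_mem_ne_zero_of_ne_bot hk
      have hst : Stable Y (LinearMap.ker f.hom.hom.hom) := by
        intro g v hv
        rw [LinearMap.mem_ker] at hv ⊢
        exact (hcomm g v).trans ((congrArg (X.ρ g) hv).trans (map_zero _))
      set ι := subRepι Y _ hst
      have hcomp : ι ≫ f = 0 := by
        ext z
        exact z.2
      have : ι = 0 := (cancel_mono f).1 (by rw [hcomp, Limits.zero_comp])
      apply hy0
      have : ι.hom ⟨y, hy⟩ = 0 := by rw [this]; rfl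
      exact this
    have hrange : LinearMap.range f.hom.hom.hom = ⊤ := by
      have hst : Stable X (LinearMap.range f.hom.hom.hom) := by
        intro g v hv
        obtain ⟨y, rfl⟩ := hv
        exact ⟨Y.ρ g y, hcomm g y⟩
      rcases h _ hst with hb | ht
      · exfalso
        apply hne
        ext y
        have : f.hom y ∈ LinearMap.range f.hom.hom.hom := ⟨y, rfl⟩
        rw [hb] at this
        simp at this ⊢; exact this
      · exact ht
    have hbij : Function.Bijective f.hom :=
      ⟨LinearMap.ker_eq_bot.1 hker, LinearMap.range_eq_top.1 hrange⟩
    set e := LinearEquiv.ofBijective f.hom.hom.hom hbij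
    have hsymm : ∀ y : Y, e.symm (f.hom y) = y := fun y => e.symm_apply_apply y
    have hcomm2 : ∀ (g : G) (v : X), e.symm (X.ρ g v) = Y.ρ g (e.symm v) := by
      intro g v
      obtain ⟨y, rfl⟩ := hbij.2 v
      rw [← hcomm, hsymm, hsymm]
    let ginv : X ⟶ Y := ⟨ConcreteCategory.ofHom e.symm.toLinearMap, fun g => by
      ext v
      exact hcomm2 g v⟩
    refine ⟨⟨ginv, ?_, ?_⟩⟩
    · ext y
      show e.symm (f.hom y) = y
      exact hsymm y
    · ext v
      obtain ⟨y, rfl⟩ := hbij.2 v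
      show f.hom (e.symm (f.hom y)) = f.hom y
      rw [hsymm]

lemma forward (K : Subgroup G)
    (hcomm : ∀ a b : MonoidAlgebra ℂ G,
      (heckeIdem K * a * heckeIdem K) * (heckeIdem K * b * heckeIdem K) =
        (heckeIdem K * b * heckeIdem K) * (heckeIdem K * a * heckeIdem K))
    (V : FDRep ℂ G) (hV : Simple V) :
    finrank ℂ (Representation.invariants (k := ℂ) (G := K) (MonoidHom.comp V.ρ K.subtype)) ≤ 1 := by
  haveI := hV
  by_contra hlt
  push_neg at hlt
  set W := Representation.invariants (k := ℂ) (G := K) (MonoidHom.comp V.ρ K.subtype) with hW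
  have hWne : W ≠ ⊥ := by
    intro h
    rw [h] at hlt
    simp [finrank_bot] at hlt
  obtain ⟨u, huW, hu0⟩ := Submodule.exists_mem_ne_zero_of_ne_bot hWne
  have hspan : ¬(W ≤ Submodule.span ℂ {u}) := by
    intro hle
    have h2 := Submodule.finrank_mono hle
    rw [finrank_span_singleton hu0] at h2
    omega
  obtain ⟨w, hwW, hwspan⟩ := SetLike.not_le_iff_exists.1 hspan
  have hw0 : w ≠ 0 := fun h => hwspan (h ▸ Submodule.zero_mem _)
  set π := Representation.asAlgebraHom V.ρ with hπ
  let ev : V → (MonoidAlgebra ℂ G →ₗ[ℂ] V) := fun v =>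
    { toFun := fun a => π a v
      map_add' := fun a b => by simp only [map_add, LinearMap.add_apply]
      map_smul' := fun c a => by simp only [map_smul, LinearMap.smul_apply, RingHom.id_apply] }
  have hev : ∀ (v : V) a, ev v a = π a v := fun _ _ => rfl
  have hev1 : ∀ v : V, ev v 1 = v := by
    intro v; rw [hev, map_one]; rfl
  have hevG : ∀ (g : G) (a) (v : V),
      π (MonoidAlgebra.single g 1 * a) v = V.ρ g (π a v) := by
    intro g a v
    rw [map_mul, Representation.asAlgebraHom_single_one]
    rfl
  have hcyc : ∀ v : V, v ≠ 0 → LinearMap.range (ev v) = ⊤ := by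
    intro v hv
    have hst : Stable V (LinearMap.range (ev v)) := by
      intro g x hx
      obtain ⟨a, rfl⟩ := hx
      exact ⟨MonoidAlgebra.single g 1 * a, hevG g a v⟩
    rcases stable_eq_bot_or_top_of_simple V _ hst with hb | ht
    · exfalso
      apply hv
      have hm : ev v 1 ∈ LinearMap.range (ev v) := ⟨1, rfl⟩
      rw [hb, Submodule.mem_bot] at hm
      rw [← hev1 v, hm]
    · exact ht
  set Z := Submodule.map (ev u) (LinearMap.ker (ev w)) with hZ
  have hZst : Stable V Z := by
    intro g x hx
    obtain ⟨a, ha, rfl⟩ := hx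
    refine ⟨MonoidAlgebra.single g 1 * a, ?_, hevG g a u⟩
    simp only [SetLike.mem_coe, LinearMap.mem_ker] at ha ⊢
    rw [hev, hevG]
    rw [hev] at ha
    rw [ha, map_zero]
  rcases stable_eq_bot_or_top_of_simple V _ hZst with hZb | hZt
  · -- Z = ⊥ : build equivariant φ with φ w = u, conclude w ∈ span u, contradiction
    have hle : LinearMap.ker (ev w) ≤ LinearMap.ker (ev u) := by
      intro a ha
      have hm : ev u a ∈ Z := ⟨a, ha, rfl⟩
      rw [hZb, Submodule.mem_bot] at hm
      exact LinearMap.mem_ker.2 hm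
    have hsurj : Function.Surjective (ev w) := LinearMap.range_eq_top.1 (hcyc w hw0)
    set qe := LinearMap.quotKerEquivOfSurjective (ev w) hsurj with hqe
    set φ : V →ₗ[ℂ] V :=
      ((LinearMap.ker (ev w)).liftQ (ev u) hle).comp qe.symm.toLinearMap with hφdef
    have hq1 : ∀ a, qe (Submodule.Quotient.mk a) = ev w a := by
      intro a
      simp [hqe, LinearMap.quotKerEquivOfSurjective, LinearMap.quotKerEquivRange_apply_mk]
    have hφ : ∀ a, φ (ev w a) = ev u a := by
      intro a
      have h1 : qe.symm (ev w a) = Submodule.Quotient.mk a := by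
        rw [← hq1 a, LinearEquiv.symm_apply_apply]
      show ((LinearMap.ker (ev w)).liftQ (ev u) hle) (qe.symm (ev w a)) = ev u a
      rw [h1, Submodule.liftQ_apply]
    have hφG : ∀ (g : G) (v : V), φ (V.ρ g v) = V.ρ g (φ v) := by
      intro g v
      obtain ⟨a, rfl⟩ := hsurj v
      have h2 : V.ρ g (ev w a) = ev w (MonoidAlgebra.single g 1 * a) := (hevG g a w).symm
      rw [h2, hφ, hφ, hev, hev, hevG]
    have hφw : φ w = u := by
      rw [← hev1 w, hφ, hev1]
    haveI : Nontrivial V := nontrivial_of_ne u 0 hu0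
    obtain ⟨c, hc⟩ := Module.End.exists_eigenvalue (φ : Module.End ℂ V)
    obtain ⟨x, hx⟩ := hc.exists_hasEigenvector
    have hE : Module.End.eigenspace (φ : Module.End ℂ V) c = ⊤ := by
      have hst : Stable V (Module.End.eigenspace (φ : Module.End ℂ V) c) := by
        intro g v hv
        rw [Module.End.mem_eigenspace_iff] at hv ⊢
        show φ (V.ρ g v) = c • V.ρ g v
        rw [hφG, hv, map_smul]
      rcases stable_eq_bot_or_top_of_simple V _ hst with hb | ht
      · exact absurd ((Submodule.eq_bot_iff _).1 hb x hx.1) hx.2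
      · exact ht
    have hall : φ w = c • w := by
      have : w ∈ Module.End.eigenspace (φ : Module.End ℂ V) c := hE ▸ Submodule.mem_top
      exact Module.End.mem_eigenspace_iff.1 this
    have hc0 : c ≠ 0 := by
      intro h
      apply hu0
      rw [← hφw, hall, h, zero_smul]
    apply hwspan
    rw [Submodule.mem_span_singleton]
    refine ⟨c⁻¹, ?_⟩
    rw [← hφw, hall, smul_smul, inv_mul_cancel₀ hc0, one_smul]
  · -- Z = ⊤ : get a, b and contradict commutativity
    have hmem : u ∈ Z := hZt ▸ Submodule.mem_top
    obtain ⟨a, haker, hau⟩ := hmem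
    have haw : π a w = 0 := haker
    have hau' : π a u = u := hau
    have hbex : w ∈ LinearMap.range (ev u) := (hcyc u hu0) ▸ Submodule.mem_top
    obtain ⟨b, hbu⟩ := hbex
    have hbu' : π b u = w := hbu
    have hpu : π (heckeIdem K) u = u := hecke_apply_invariant K V.ρ u huW
    have hpw : π (heckeIdem K) w = w := hecke_apply_invariant K V.ρ w hwW
    have key := congrArg (fun c => π c u) (hcomm a b)
    simp only [map_mul, Module.End.mul_apply] at key
    have lhs0 : π (heckeIdem K) (π a (π (heckeIdem K)
        (π (heckeIdem K) (π b (π (heckeIdem K) u))))) = 0 := by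
      rw [hpu, hbu', hpw, hpw, haw, map_zero]
    have rhs : π (heckeIdem K) (π b (π (heckeIdem K)
        (π (heckeIdem K) (π a (π (heckeIdem K) u))))) = w := by
      rw [hpu, hau', hpu, hpu, hbu', hpw]
    exact hw0 (rhs.symm.trans (key.symm.trans lhs0))


section Backward

instance : FiniteDimensional ℂ (MonoidAlgebra ℂ G) :=
  Module.Finite.equiv (MonoidAlgebra.coeffLinearEquiv ℂ).symm

local notation "A" => MonoidAlgebra ℂ G

noncomputable instance fdsub (S : Submodule A A) : FiniteDimensional ℂ S :=
  FiniteDimensional.of_injective ((S.subtype).restrictScalars ℂ) S.injective_subtype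

/-- The representation of `G` on a left submodule of the group algebra. -/
noncomputable def subModRep (S : Submodule A A) : Representation ℂ G S where
  toFun g :=
    { toFun := fun y => ⟨MonoidAlgebra.single g 1 * (y : A), by
        simpa [smul_eq_mul] using S.smul_mem (MonoidAlgebra.single g (1:ℂ)) y.2⟩
      map_add' := fun y z => by
        ext
        simp [mul_add]
      map_smul' := fun c y => by
        ext
        simp [Algebra.mul_smul_comm] }
  map_one' := by
    ext y
    simp [MonoidAlgebra.one_def]
  map_mul' g h := by
    ext y
    simp [MonoidAlgebra.single_mul_single, mul_assoc]

lemma subModRep_coe (S : Submodule A A) (c : A) (y : S) :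
    ((Representation.asAlgebraHom (subModRep S) c y : S) : A) = c * (y : A) := by
  induction c using MonoidAlgebra.induction_on with
  | of g =>
    rw [Representation.asAlgebraHom_of]
    rfl
  | add f g hf hg =>
    rw [map_add, LinearMap.add_apply, Submodule.coe_add, hf, hg, add_mul]
  | smul r f hf =>
    rw [map_smul, LinearMap.smul_apply, Submodule.coe_smul_of_tower, hf, smul_mul_assoc]

/-- `FDRep` attached to a submodule of the group algebra. -/
noncomputable def subModFDRep (S : Submodule A A) : FDRep ℂ G :=
  FDRep.of (subModRep S)

lemma subModFDRep_simple (S : Submodule A A) (hS : IsSimpleModule A S) :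
    Simple (subModFDRep S) := by
  apply simple_of_stable
  · haveI := hS.nontrivial
    obtain ⟨y, hy⟩ := exists_ne (0 : S)
    exact ⟨y, hy⟩
  · intro N hN
    let N' : Submodule A S :=
      { carrier := SetLike.coe N
        add_mem' := fun h1 h2 => N.add_mem h1 h2
        zero_mem' := N.zero_mem
        smul_mem' := by
          intro c y hy
          induction c using MonoidAlgebra.induction_on with
          | of g =>
            have h2 := hN g y hy
            convert h2 using 1
            exact Iff.rfl
          | add f g hf hg =>
            rw [add_smul]
            exact N.add_mem hf hg
          | smul r f hf =>
            rw [smul_assoc]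
            exact N.smul_mem r hf }
    rcases eq_bot_or_eq_top (α := Submodule A S) N' with hb | ht
    · left
      apply SetLike.ext'
      calc @Eq (Set S) (SetLike.coe N) (SetLike.coe N') := rfl
        _ = SetLike.coe (⊥ : Submodule A S) := by rw [hb]
        _ = {0} := Submodule.bot_coe
        @Eq (Set S) _ (SetLike.coe (⊥ : Submodule ℂ (subModFDRep S).V)) :=
            (Submodule.bot_coe).symm
    · right
      apply SetLike.ext'
      calc @Eq (Set S) (SetLike.coe N) (SetLike.coe N') := rfl
        _ = SetLike.coe (⊤ : Submodule A S) := by rw [ht]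
        _ = Set.univ := Submodule.top_coe
        @Eq (Set S) _ (SetLike.coe (⊤ : Submodule ℂ (subModFDRep S).V)) :=
            (Submodule.top_coe (R := ℂ) (M := (subModFDRep S).V)).symm

lemma backward (K : Subgroup G)
    (hdim : ∀ V : FDRep ℂ G, Simple V →
      finrank ℂ (Representation.invariants (k := ℂ) (G := K)
        (MonoidHom.comp V.ρ K.subtype)) ≤ 1)
    (a b : A) :
    (heckeIdem K * a * heckeIdem K) * (heckeIdem K * b * heckeIdem K) =
      (heckeIdem K * b * heckeIdem K) * (heckeIdem K * a * heckeIdem K) := by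
  haveI : NeZero ((Fintype.card G : ℂ)) := ⟨Nat.cast_ne_zero.2 Fintype.card_ne_zero⟩
  haveI : IsSemisimpleRing A := inferInstance
  set x := (heckeIdem K * a * heckeIdem K) * (heckeIdem K * b * heckeIdem K) -
    (heckeIdem K * b * heckeIdem K) * (heckeIdem K * a * heckeIdem K) with hx
  have key : ∀ y : A, x * y = 0 := by
    have htop := IsSemisimpleModule.sSup_simples_eq_top A A
    intro y
    have hy : y ∈ sSup { m : Submodule A A | IsSimpleModule A m } := by
      rw [htop]; trivial
    rw [sSup_eq_iSup'] at hy
    refine Submodule.iSup_induction _ (motive := fun z => x * z = 0) hy ?_ (mul_zero x)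
      (fun y₁ y₂ h1 h2 => by
        show x * (y₁ + y₂) = 0
        rw [mul_add, show x * y₁ = 0 from h1, show x * y₂ = 0 from h2, add_zero])
    rintro ⟨S, hS⟩ z hz
    show x * z = 0
    -- z ∈ S, S simple
    haveI : IsSimpleModule A S := hS
    have hsimple := subModFDRep_simple S hS
    have hd := hdim (subModFDRep S) hsimple
    set ρS := subModRep S with hρS
    set π := Representation.asAlgebraHom ρS with hπ
    have hd' : finrank ℂ (Representation.invariants (k := ℂ) (G := K)
        (MonoidHom.comp ρS K.subtype)) ≤ 1 := hd
    have hcomm := proj_comm (Representation.invariants (k := ℂ) (G := K)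
        (MonoidHom.comp ρS K.subtype)) hd'
      (π (heckeIdem K)) (π a) (π b)
      (fun v => hecke_mem_invariants K ρS v)
      (fun w hw => hecke_apply_invariant K ρS w hw)
    have hπeq : π ((heckeIdem K * a * heckeIdem K) * (heckeIdem K * b * heckeIdem K))
        = π ((heckeIdem K * b * heckeIdem K) * (heckeIdem K * a * heckeIdem K)) := by
      simp only [map_mul]
      exact hcomm
    have hπx : π x = 0 := by
      rw [hx, map_sub, hπeq, sub_self]
    have := subModRep_coe S x ⟨z, hz⟩
    rw [hπx] at this
    simpa using this.symm
  have h1 := key 1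
  rw [mul_one, hx, sub_eq_zero] at h1
  exact h1

end Backward

end HeckeAux

theorem stmt_1 {G : Type} [Group G] [Fintype G] (K : Subgroup G) :
    (∀ a b : MonoidAlgebra ℂ G,
        (heckeIdem K * a * heckeIdem K) * (heckeIdem K * b * heckeIdem K) =
          (heckeIdem K * b * heckeIdem K) * (heckeIdem K * a * heckeIdem K))
      ↔ ∀ V : FDRep ℂ G, Simple V →
          Module.finrank ℂ
            (Representation.invariants (MonoidHom.comp V.ρ K.subtype)) ≤ 1 := by
  constructor
  · intro h V hV
    exact HeckeAux.forward K h V hV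
  · intro h a b
    exact HeckeAux.backward K h a b
end

section
/- Let G be a finite group and K a subgroup. If KgK = Kg⁻¹K for all g ∈ G, then the Hecke algebra H(G,K) = ε_K ℂ[G] ε_K is commutative, i.e. ab = ba for all a, b ∈ ε_K ℂ[G] ε_K (Gelfand's trick). -/
section Aux

variable {G : Type} [Group G] [Fintype G] (K : Subgroup G)

open MonoidAlgebra Finsupp

/-- The anti-automorphism `g ↦ g⁻¹` on the group algebra, as a linear map on
underlying `Finsupp`s. -/
noncomputable def invTranspose : MonoidAlgebra ℂ G ≃ₗ[ℂ] MonoidAlgebra ℂ G :=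
  MonoidAlgebra.mapDomainLinearEquiv ℂ ℂ (Equiv.inv G)

lemma invTranspose_apply (f : MonoidAlgebra ℂ G) (g : G) :
    (invTranspose f).coeff g = f.coeff g⁻¹ := rfl

lemma invTranspose_single (g : G) (r : ℂ) :
    invTranspose (MonoidAlgebra.single g r) = MonoidAlgebra.single g⁻¹ r := by
  show MonoidAlgebra.mapDomainLinearEquiv ℂ ℂ (Equiv.inv G) (MonoidAlgebra.single g r) =
    MonoidAlgebra.single g⁻¹ r
  simp

lemma invTranspose_mul (a b : MonoidAlgebra ℂ G) :
    invTranspose (a * b) = invTranspose b * invTranspose a := by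
  induction a using MonoidAlgebra.induction_linear with
  | zero => simp
  | add f g hf hg => simp [add_mul, mul_add, hf, hg]
  | single ga ra =>
    induction b using MonoidAlgebra.induction_linear with
    | zero => simp
    | add f g hf hg => simp [add_mul, mul_add, hf, hg]
    | single gb rb =>
      rw [MonoidAlgebra.single_mul_single, invTranspose_single, invTranspose_single,
        invTranspose_single, MonoidAlgebra.single_mul_single, mul_inv_rev,
        mul_comm rb ra]

lemma single_mul_heckeIdem {k : G} (hk : k ∈ K) :
    MonoidAlgebra.single k (1 : ℂ) * heckeIdem K = heckeIdem K := by
  letI : Fintype K := Fintype.ofFinite K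
  unfold heckeIdem
  rw [mul_smul_comm, Finset.mul_sum]
  congr 1
  refine Fintype.sum_equiv (Equiv.mulLeft (⟨k, hk⟩ : K)) _ _ fun x => ?_
  simp [MonoidAlgebra.single_mul_single]

lemma heckeIdem_mul_single {k : G} (hk : k ∈ K) :
    heckeIdem K * MonoidAlgebra.single k (1 : ℂ) = heckeIdem K := by
  letI : Fintype K := Fintype.ofFinite K
  unfold heckeIdem
  rw [smul_mul_assoc, Finset.sum_mul]
  congr 1
  refine Fintype.sum_equiv (Equiv.mulRight (⟨k, hk⟩ : K)) _ _ fun x => ?_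
  simp [MonoidAlgebra.single_mul_single]

lemma heckeIdem_mul_heckeIdem : heckeIdem K * heckeIdem K = heckeIdem K := by
  letI : Fintype K := Fintype.ofFinite K
  conv_lhs => rw [show heckeIdem K * heckeIdem K =
    (Nat.card K : ℂ)⁻¹ • ∑ k : K,
      (MonoidAlgebra.single (k : G) (1 : ℂ) * heckeIdem K) by
        rw [heckeIdem]; rw [smul_mul_assoc, Finset.sum_mul]]
  have : ∀ k : K, MonoidAlgebra.single (k : G) (1 : ℂ) * heckeIdem K =
      heckeIdem K := fun k => single_mul_heckeIdem K k.2
  simp only [this]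
  rw [Finset.sum_const, Finset.card_univ]
  rw [← Nat.cast_smul_eq_nsmul ℂ, smul_smul]
  have hcard : (Nat.card K : ℂ) ≠ 0 := by
    simp [Nat.card_pos.ne']
  rw [Fintype.card_eq_nat_card, inv_mul_cancel₀ hcard, one_smul]

lemma hecke_biinv_left (a : MonoidAlgebra ℂ G) {k : G} (hk : k ∈ K) :
    MonoidAlgebra.single k (1 : ℂ) * (heckeIdem K * a * heckeIdem K) =
      heckeIdem K * a * heckeIdem K := by
  rw [← mul_assoc, ← mul_assoc, single_mul_heckeIdem K hk]

lemma hecke_biinv_right (a : MonoidAlgebra ℂ G) {k : G} (hk : k ∈ K) :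
    (heckeIdem K * a * heckeIdem K) * MonoidAlgebra.single k (1 : ℂ) =
      heckeIdem K * a * heckeIdem K := by
  rw [mul_assoc, heckeIdem_mul_single K hk]

lemma hecke_coeff_left (a : MonoidAlgebra ℂ G) {k : G} (hk : k ∈ K) (y : G) :
    (heckeIdem K * a * heckeIdem K).coeff (k * y) = (heckeIdem K * a * heckeIdem K).coeff y := by
  conv_lhs => rw [← hecke_biinv_left K a hk]
  rw [MonoidAlgebra.coeff_single_mul_apply]
  simp [inv_mul_cancel_left]

lemma hecke_coeff_right (a : MonoidAlgebra ℂ G) {k : G} (hk : k ∈ K) (y : G) :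
    (heckeIdem K * a * heckeIdem K).coeff (y * k) = (heckeIdem K * a * heckeIdem K).coeff y := by
  conv_lhs => rw [← hecke_biinv_right K a hk]
  rw [MonoidAlgebra.coeff_mul_single_apply]
  simp [mul_inv_cancel_right]

lemma invTranspose_hecke
    (h : ∀ g : G, DoubleCoset.doubleCoset g (K : Set G) (K : Set G) =
      DoubleCoset.doubleCoset g⁻¹ (K : Set G) (K : Set G))
    (a : MonoidAlgebra ℂ G) :
    invTranspose (heckeIdem K * a * heckeIdem K) =
      heckeIdem K * a * heckeIdem K := by
  ext g
  rw [invTranspose_apply]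
  have hmem : g⁻¹ ∈ DoubleCoset.doubleCoset g (K : Set G) (K : Set G) := by
    rw [h g]
    exact DoubleCoset.mem_doubleCoset_self K K g⁻¹
  rw [DoubleCoset.mem_doubleCoset] at hmem
  obtain ⟨k₁, hk₁, k₂, hk₂, hg⟩ := hmem
  have hassoc : k₁ * g * k₂ = k₁ * (g * k₂) := mul_assoc _ _ _
  rw [hg, hassoc, hecke_coeff_left K a hk₁, hecke_coeff_right K a hk₂]

end Aux

/-- Gelfand's trick: if `KgK = Kg⁻¹K` for all `g ∈ G`, then the Hecke algebra
`H(G,K) = ε_K ℂ[G] ε_K` is commutative. -/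
theorem stmt_2 {G : Type} [Group G] [Fintype G] (K : Subgroup G)
    (h : ∀ g : G, DoubleCoset.doubleCoset g (K : Set G) (K : Set G) =
      DoubleCoset.doubleCoset g⁻¹ (K : Set G) (K : Set G)) :
    ∀ a b : MonoidAlgebra ℂ G,
      (heckeIdem K * a * heckeIdem K) * (heckeIdem K * b * heckeIdem K) =
        (heckeIdem K * b * heckeIdem K) * (heckeIdem K * a * heckeIdem K) := by
  intro a b
  have key : (heckeIdem K * a * heckeIdem K) * (heckeIdem K * b * heckeIdem K) =
      heckeIdem K * (a * heckeIdem K * heckeIdem K * b) * heckeIdem K := by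
    simp only [mul_assoc]
  calc (heckeIdem K * a * heckeIdem K) * (heckeIdem K * b * heckeIdem K)
      = heckeIdem K * (a * heckeIdem K * heckeIdem K * b) * heckeIdem K := key
    _ = invTranspose (heckeIdem K * (a * heckeIdem K * heckeIdem K * b) * heckeIdem K) := by
        rw [invTranspose_hecke K h]
    _ = invTranspose ((heckeIdem K * a * heckeIdem K) * (heckeIdem K * b * heckeIdem K)) := by
        rw [key]
    _ = invTranspose (heckeIdem K * b * heckeIdem K) *
          invTranspose (heckeIdem K * a * heckeIdem K) := invTranspose_mul _ _
    _ = (heckeIdem K * b * heckeIdem K) * (heckeIdem K * a * heckeIdem K) := by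
        rw [invTranspose_hecke K h, invTranspose_hecke K h]
end

section
/- Let G be a finite group and K a subgroup. Then |G| · #{double cosets KxK with x⁻¹ ∈ KxK} = #{(Kx, g) ∈ (K\G) × G : xg² ∈ Kx}, i.e. the number of self-inverse double cosets of K in G equals (1/|G|) times the number of pairs (Kx, g) of a right coset Kx and an element g ∈ G such that xg² ∈ Kx. -/
private lemma card_fibers {α γ : Type} [Finite α] [Finite γ] (f : α → γ) (n : ℕ)
    (h : ∀ c, Nat.card {a // f a = c} = n) : Nat.card α = Nat.card γ * n := by
  classical
  have : Fintype γ := Fintype.ofFinite γ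
  have : Fintype α := Fintype.ofFinite α
  have h' : ∀ c, Fintype.card {a // f a = c} = n := fun c => by
    rw [← Nat.card_eq_fintype_card]; exact h c
  calc Nat.card α = Nat.card (Σ c, {a // f a = c}) :=
        Nat.card_congr (Equiv.sigmaFiberEquiv f).symm
    _ = Nat.card γ * n := by
        simp [Nat.card_eq_fintype_card, h', mul_comm]

/-- In a double coset `KyK` with `y * y ∈ K`, the number of elements whose square lies in
`K` is exactly `|K|`. -/
private lemma core_count {G : Type} [Group G] [Fintype G] (K : Subgroup G) (y : G)
    (hc : y * y ∈ K) :
    Nat.card {z : G // (∃ a ∈ K, ∃ b ∈ K, z = a * y * b) ∧ z * z ∈ K} = Nat.card K := by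
  classical
  set HT := {u : G // u ∈ K ∧ y * u * y⁻¹ ∈ K} with hHT
  set T := {ab : G × G // ab.1 ∈ K ∧ ab.2 ∈ K ∧ y * (ab.2 * ab.1) * y⁻¹ ∈ K} with hTdef
  set Fib := {z : G // (∃ a ∈ K, ∃ b ∈ K, z = a * y * b) ∧ z * z ∈ K} with hFib
  have key : ∀ a b : G, (a * y * b) * (a * y * b) = a * ((y * (b * a) * y⁻¹) * (y * y)) * b := by
    intro a b; group
  -- the map T → Fib
  have φmem : ∀ t : T, (∃ a ∈ K, ∃ b ∈ K, (t.1.1 * y * t.1.2) = a * y * b) ∧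
      (t.1.1 * y * t.1.2) * (t.1.1 * y * t.1.2) ∈ K := by
    rintro ⟨⟨a, b⟩, ha, hb, hab⟩
    refine ⟨⟨a, ha, b, hb, rfl⟩, ?_⟩
    rw [key a b]
    exact K.mul_mem (K.mul_mem ha (K.mul_mem hab hc)) hb
  let φ : T → Fib := fun t => ⟨t.1.1 * y * t.1.2, φmem t⟩
  -- T ≃ HT × K
  have eT : T ≃ HT × {a : G // a ∈ K} :=
    { toFun := fun t => ⟨⟨t.1.2 * t.1.1, K.mul_mem t.2.2.1 t.2.1, t.2.2.2⟩, ⟨t.1.1, t.2.1⟩⟩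
      invFun := fun p => ⟨⟨p.2.1, p.1.1 * p.2.1⁻¹⟩, p.2.2,
        K.mul_mem p.1.2.1 (K.inv_mem p.2.2), by
          have : p.1.1 * p.2.1⁻¹ * p.2.1 = p.1.1 := by group
          rw [this]; exact p.1.2.2⟩
      left_inv := fun t => by
        apply Subtype.ext
        obtain ⟨⟨a, b⟩, _⟩ := t
        simp
      right_inv := fun p => by
        obtain ⟨⟨h, _⟩, ⟨a, _⟩⟩ := p
        simp [Prod.ext_iff, Subtype.ext_iff] }
  -- each fiber of φ is equivalent to HT
  have hfib : ∀ z : Fib, Nat.card {t : T // φ t = z} = Nat.card HT := by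
    intro z
    obtain ⟨⟨a₀, ha₀, b₀, hb₀, hz⟩, hz2⟩ := z.2
    have hk : y * (b₀ * a₀) * y⁻¹ ∈ K := by
      have h1 : y * (b₀ * a₀) * y⁻¹ = a₀⁻¹ * (z.1 * z.1) * b₀⁻¹ * (y * y)⁻¹ := by
        rw [hz]; group
      rw [h1]
      exact K.mul_mem (K.mul_mem (K.mul_mem (K.inv_mem ha₀) hz2) (K.inv_mem hb₀)) (K.inv_mem hc)
    refine Nat.card_congr ?_
    refine
      { toFun := fun t => ⟨t.1.1.2 * b₀⁻¹, K.mul_mem t.1.2.2.1 (K.inv_mem hb₀), ?_⟩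
        invFun := fun u => ⟨⟨⟨a₀ * (y * u.1⁻¹ * y⁻¹), u.1 * b₀⟩, ?_, ?_, ?_⟩, ?_⟩
        left_inv := ?_
        right_inv := ?_ }
    · -- y * (b*b₀⁻¹) * y⁻¹ ∈ K
      have h : t.1.1.1 * y * t.1.1.2 = z.1 := congrArg Subtype.val t.2
      have h2 : y * (t.1.1.2 * b₀⁻¹) * y⁻¹ =
          t.1.1.1⁻¹ * (t.1.1.1 * y * t.1.1.2) * (b₀⁻¹ * y⁻¹) := by group
      rw [h2, h, hz]
      have h3 : t.1.1.1⁻¹ * (a₀ * y * b₀) * (b₀⁻¹ * y⁻¹) = t.1.1.1⁻¹ * a₀ := by group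
      rw [h3]
      exact K.mul_mem (K.inv_mem t.1.2.1) ha₀
    · -- a₀ * (y*u⁻¹*y⁻¹) ∈ K
      have h4 : y * u.1⁻¹ * y⁻¹ = (y * u.1 * y⁻¹)⁻¹ := by group
      rw [h4]
      exact K.mul_mem ha₀ (K.inv_mem u.2.2)
    · exact K.mul_mem u.2.1 hb₀
    · -- y * ((u*b₀) * (a₀ * (y*u⁻¹*y⁻¹))) * y⁻¹ ∈ K
      have h5 : y * ((u.1 * b₀) * (a₀ * (y * u.1⁻¹ * y⁻¹))) * y⁻¹ =
          (y * u.1 * y⁻¹) * ((y * (b₀ * a₀) * y⁻¹) * ((y * y) * (u.1⁻¹ * (y * y)⁻¹))) := by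
        group
      rw [h5]
      exact K.mul_mem u.2.2 (K.mul_mem hk (K.mul_mem hc (K.mul_mem (K.inv_mem u.2.1)
        (K.inv_mem hc))))
    · -- φ value = z
      apply Subtype.ext
      show (a₀ * (y * u.1⁻¹ * y⁻¹)) * y * (u.1 * b₀) = z.1
      rw [hz]; group
    · -- left_inv
      rintro ⟨⟨⟨a, b⟩, ha, hb, hab⟩, ht⟩
      have h : a * y * b = z.1 := congrArg Subtype.val ht
      apply Subtype.ext
      apply Subtype.ext
      show (a₀ * (y * (b * b₀⁻¹)⁻¹ * y⁻¹), (b * b₀⁻¹) * b₀) = (a, b)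
      have h6 : a₀ * (y * (b * b₀⁻¹)⁻¹ * y⁻¹) = (a₀ * y * b₀) * (b⁻¹ * y⁻¹) := by group
      have h7 : (a₀ * y * b₀) = a * y * b := by rw [← hz, ← h]
      refine Prod.ext ?_ (by group)
      rw [h6, h7]; group
    · -- right_inv
      rintro ⟨u, hu⟩
      apply Subtype.ext
      show (u * b₀) * b₀⁻¹ = u
      group
  have hT1 : Nat.card T = Nat.card Fib * Nat.card HT := card_fibers φ _ hfib
  have hT2 : Nat.card T = Nat.card HT * Nat.card {a : G // a ∈ K} := by
    rw [Nat.card_congr eT, Nat.card_prod]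
  have hHTpos : 0 < Nat.card HT := by
    have : Nonempty HT := ⟨⟨1, K.one_mem, by simpa using K.one_mem⟩⟩
    exact Nat.card_pos
  have hKcard : Nat.card {a : G // a ∈ K} = Nat.card K := rfl
  have : Nat.card Fib * Nat.card HT = Nat.card K * Nat.card HT := by
    rw [← hT1, hT2, hKcard, mul_comm]
  exact Nat.eq_of_mul_eq_mul_right hHTpos this

/-- The number of elements of `G` whose square lies in `K` is `|K|` times the number of
self-inverse double cosets. -/
private lemma S_card {G : Type} [Group G] [Fintype G] (K : Subgroup G) :
    Nat.card {z : G // z * z ∈ K} =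
      Nat.card {q : DoubleCoset.Quotient (K : Set G) (K : Set G) //
        ∃ x : G, DoubleCoset.mk K K x = q ∧
          x⁻¹ ∈ DoubleCoset.doubleCoset x (K : Set G) (K : Set G)} * Nat.card K := by
  classical
  haveI : Finite (DoubleCoset.Quotient (K : Set G) (K : Set G)) := Quotient.finite _
  set D := {q : DoubleCoset.Quotient (K : Set G) (K : Set G) //
    ∃ x : G, DoubleCoset.mk K K x = q ∧ x⁻¹ ∈ DoubleCoset.doubleCoset x (K : Set G) (K : Set G)} with hD
  have fmem : ∀ z : {z : G // z * z ∈ K}, ∃ x : G, DoubleCoset.mk K K x = DoubleCoset.mk K K z.1 ∧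
      x⁻¹ ∈ DoubleCoset.doubleCoset x (K : Set G) (K : Set G) := by
    intro z
    refine ⟨z.1, rfl, DoubleCoset.mem_doubleCoset.mpr ⟨(z.1 * z.1)⁻¹, K.inv_mem z.2, 1, K.one_mem, by group⟩⟩
  let f : {z : G // z * z ∈ K} → D := fun z => ⟨DoubleCoset.mk K K z.1, fmem z⟩
  refine card_fibers f _ ?_
  intro q
  obtain ⟨x, hx, hxinv⟩ := q.2
  obtain ⟨k₁, hk₁, k₂, hk₂, hxe⟩ := DoubleCoset.mem_doubleCoset.mp hxinv
  -- y := x * k₂ has y * y ∈ K and generates the same double coset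
  have h9 : x * k₂ = k₁⁻¹ * x⁻¹ := by
    calc x * k₂ = k₁⁻¹ * (k₁ * x * k₂) := by group
      _ = k₁⁻¹ * x⁻¹ := by rw [← hxe]
  have hc : (x * k₂) * (x * k₂) ∈ K := by
    have : (x * k₂) * (x * k₂) = k₁⁻¹ * k₂ := by
      nth_rewrite 1 [h9]; group
    rw [this]; exact K.mul_mem (K.inv_mem hk₁) hk₂
  have hqy : DoubleCoset.mk K K (x * k₂) = q.1 := by
    rw [← hx]
    exact ((DoubleCoset.eq K K x (x * k₂)).mpr ⟨1, K.one_mem, k₂, hk₂, by group⟩).symm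
  have e : {t : {z : G // z * z ∈ K} // f t = q} ≃
      {z : G // (∃ a ∈ K, ∃ b ∈ K, z = a * (x * k₂) * b) ∧ z * z ∈ K} := by
    refine
      { toFun := fun t => ⟨t.1.1, ?_, t.1.2⟩
        invFun := fun u => ⟨⟨u.1, u.2.2⟩, ?_⟩
        left_inv := fun t => Subtype.ext (Subtype.ext rfl)
        right_inv := fun u => Subtype.ext rfl }
    · have hmk : DoubleCoset.mk K K (x * k₂) = DoubleCoset.mk K K t.1.1 := by
        rw [hqy]
        exact (congrArg Subtype.val t.2).symm
      obtain ⟨a, ha, b, hb, he⟩ := (DoubleCoset.eq K K (x * k₂) t.1.1).mp hmk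
      exact ⟨a, ha, b, hb, he⟩
    · apply Subtype.ext
      show DoubleCoset.mk K K u.1 = q.1
      obtain ⟨a, ha, b, hb, he⟩ := u.2.1
      rw [← hqy]
      exact ((DoubleCoset.eq K K (x * k₂) u.1).mpr ⟨a, ha, b, hb, he⟩).symm
  rw [Nat.card_congr e]
  exact core_count K (x * k₂) hc

/-- Frame's lemma: `|G|` times the number of self-inverse double cosets `KxK`
(those with `x⁻¹ ∈ KxK`) equals the number of pairs `(Kx, g)` of a right coset `Kx`
and an element `g ∈ G` such that `xg² ∈ Kx`. -/
theorem stmt_6 {G : Type} [Group G] [Fintype G] (K : Subgroup G) :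
    Nat.card G *
        Nat.card {q : DoubleCoset.Quotient (K : Set G) (K : Set G) //
          ∃ x : G, DoubleCoset.mk K K x = q ∧
            x⁻¹ ∈ DoubleCoset.doubleCoset x (K : Set G) (K : Set G)}
      = Nat.card {p : Quotient (QuotientGroup.rightRel K) × G //
          ∃ x : G, Quotient.mk (QuotientGroup.rightRel K) x = p.1 ∧
            ∃ k ∈ K, x * p.2 ^ 2 = k * x} := by
  classical
  haveI : Finite (DoubleCoset.Quotient (K : Set G) (K : Set G)) := Quotient.finite _
  set A := {xg : G × G // ∃ k ∈ K, xg.1 * xg.2 ^ 2 = k * xg.1} with hA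
  set P := {p : Quotient (QuotientGroup.rightRel K) × G //
    ∃ x : G, Quotient.mk (QuotientGroup.rightRel K) x = p.1 ∧
      ∃ k ∈ K, x * p.2 ^ 2 = k * x} with hP
  set S := {z : G // z * z ∈ K} with hS
  -- Step 1 : |A| = |P| * |K|
  have πmem : ∀ t : A, ∃ x : G,
      Quotient.mk (QuotientGroup.rightRel K) x = Quotient.mk (QuotientGroup.rightRel K) t.1.1 ∧
      ∃ k ∈ K, x * t.1.2 ^ 2 = k * x := fun t => ⟨t.1.1, rfl, t.2⟩
  let π : A → P := fun t => ⟨(Quotient.mk (QuotientGroup.rightRel K) t.1.1, t.1.2), πmem t⟩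
  have h1 : Nat.card A = Nat.card P * Nat.card K := by
    refine card_fibers π _ ?_
    intro p
    obtain ⟨x₀, hx₀, k₀, hk₀, he₀⟩ := p.2
    refine Nat.card_congr ?_
    refine
      { toFun := fun t => ⟨x₀ * t.1.1.1⁻¹, ?_⟩
        invFun := fun u => ⟨⟨(u.1⁻¹ * x₀, p.1.2), ⟨u.1⁻¹ * k₀ * u.1,
          K.mul_mem (K.mul_mem (K.inv_mem u.2) hk₀) u.2, ?_⟩⟩, ?_⟩
        left_inv := ?_
        right_inv := ?_ }
    · -- x₀ * x⁻¹ ∈ K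
      have hcomp : Quotient.mk (QuotientGroup.rightRel K) t.1.1.1 = p.1.1 :=
        congrArg (fun r => r.1.1) t.2
      have hr : Quotient.mk (QuotientGroup.rightRel K) t.1.1.1 =
          Quotient.mk (QuotientGroup.rightRel K) x₀ := by rw [hcomp, hx₀]
      have := Quotient.eq.mp hr
      rwa [QuotientGroup.rightRel_apply] at this
    · -- coset-transferred equation
      calc (u.1⁻¹ * x₀) * p.1.2 ^ 2 = u.1⁻¹ * (x₀ * p.1.2 ^ 2) := by group
        _ = u.1⁻¹ * (k₀ * x₀) := by rw [he₀]
        _ = (u.1⁻¹ * k₀ * u.1) * (u.1⁻¹ * x₀) := by group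
    · -- π value = p
      apply Subtype.ext
      have hq : Quotient.mk (QuotientGroup.rightRel K) (u.1⁻¹ * x₀) = p.1.1 := by
        rw [← hx₀]
        refine Quotient.sound (QuotientGroup.rightRel_apply.mpr ?_)
        have : x₀ * (u.1⁻¹ * x₀)⁻¹ = u.1 := by group
        rw [this]; exact u.2
      exact Prod.ext hq rfl
    · -- left inverse
      rintro ⟨⟨⟨a, g⟩, hag⟩, ht⟩
      have hg : g = p.1.2 := congrArg (fun r => r.1.2) ht
      apply Subtype.ext
      apply Subtype.ext
      show ((x₀ * a⁻¹)⁻¹ * x₀, p.1.2) = (a, g)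
      refine Prod.ext (by group) hg.symm
    · -- right inverse
      rintro ⟨u, hu⟩
      apply Subtype.ext
      show x₀ * (u⁻¹ * x₀)⁻¹ = u
      group
  -- Step 2 : |A| = |G| * |S|
  have e2 : A ≃ G × S := by
    refine
      { toFun := fun t => ⟨t.1.1, ⟨t.1.1 * t.1.2 * t.1.1⁻¹, ?_⟩⟩
        invFun := fun p => ⟨⟨p.1, p.1⁻¹ * p.2.1 * p.1⟩, ⟨p.2.1 * p.2.1, p.2.2, by rw [pow_two]; group⟩⟩
        left_inv := ?_
        right_inv := ?_ }
    · obtain ⟨k, hk, he⟩ := t.2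
      have : (t.1.1 * t.1.2 * t.1.1⁻¹) * (t.1.1 * t.1.2 * t.1.1⁻¹) =
          (t.1.1 * t.1.2 ^ 2) * t.1.1⁻¹ := by rw [pow_two]; group
      rw [this, he]
      have : k * t.1.1 * t.1.1⁻¹ = k := by group
      rw [this]; exact hk
    · rintro ⟨⟨x, g⟩, hxg⟩
      apply Subtype.ext
      show (x, x⁻¹ * (x * g * x⁻¹) * x) = (x, g)
      exact Prod.ext rfl (by group)
    · rintro ⟨x, z, hz⟩
      refine Prod.ext rfl (Subtype.ext ?_)
      show x * (x⁻¹ * z * x) * x⁻¹ = z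
      group
  have h2 : Nat.card A = Nat.card G * Nat.card S := by
    rw [Nat.card_congr e2, Nat.card_prod]
  -- Step 3 : |S| = |D| * |K|
  have h3 := S_card K
  -- combine
  have hKpos : 0 < Nat.card K := Nat.card_pos
  apply Nat.eq_of_mul_eq_mul_right hKpos
  calc Nat.card G * Nat.card _ * Nat.card K
      = Nat.card G * (Nat.card _ * Nat.card K) := by rw [mul_assoc]
    _ = Nat.card G * Nat.card S := by rw [← h3]
    _ = Nat.card A := h2.symm
    _ = Nat.card P * Nat.card K := h1
end

section
/- Let G be a finite group and d a positive integer. Then the number of real simultaneous conjugacy classes in G^d equals (1/|G|) ∑_{g∈G} r(g)^{d+1}, where r(g) = #{x ∈ G : x² = g} is the number of square roots of g in G. -/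
open MulAction Finset

section Stmt11Aux

variable {G : Type} [Group G] [Fintype G]

/-- Generic double counting. -/
lemma stmt11_sum_card_swap {α β : Type} [Fintype α] [Fintype β] (p : α → β → Prop) :
    ∑ b : β, Nat.card {a : α // p a b} = ∑ a : α, Nat.card {b : β // p a b} := by
  classical
  simp only [Nat.card_eq_fintype_card, Fintype.card_subtype, Finset.card_filter]
  exact Finset.sum_comm

lemma stmt11_iffA (a y : G) : ConjAct.toConjAct a • y = y⁻¹ ↔ (y * a) ^ 2 = a ^ 2 := by
  rw [ConjAct.toConjAct_smul, pow_two, pow_two]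
  constructor
  · intro h
    calc (y * a) * (y * a) = y * (a * y * a⁻¹) * (a * a) := by group
    _ = y * y⁻¹ * (a * a) := by rw [h]
    _ = a * a := by group
  · intro h
    have h2 : y * (a * y * a⁻¹) * (a * a) = y * y⁻¹ * (a * a) := by
      calc y * (a * y * a⁻¹) * (a * a) = (y * a) * (y * a) := by group
      _ = a * a := h
      _ = y * y⁻¹ * (a * a) := by group
    exact mul_left_cancel (mul_right_cancel h2)

lemma stmt11_card_fixed (d : ℕ) (a : G) :
    Nat.card {x : Fin d → G // (ConjAct.toConjAct a) • x = fun i => (x i)⁻¹}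
      = Nat.card {x : G // x ^ 2 = a ^ 2} ^ d := by
  have e1 : {x : Fin d → G // (ConjAct.toConjAct a) • x = fun i => (x i)⁻¹}
      ≃ (Fin d → {y : G // (y * a) ^ 2 = a ^ 2}) := by
    refine (Equiv.subtypeEquivRight fun x => ?_).trans Equiv.subtypePiEquivPi
    rw [funext_iff]
    exact forall_congr' fun i => by rw [Pi.smul_apply, stmt11_iffA]
  rw [Nat.card_congr e1, Nat.card_fun, Nat.card_eq_fintype_card (α := Fin d), Fintype.card_fin]
  congr 1
  exact Nat.card_congr (Equiv.subtypeEquiv (Equiv.mulRight a) (fun y => by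
    simp))

end Stmt11Aux

section More
variable {G : Type} [Group G] [Fintype G]

lemma stmt11_sum_sq (d : ℕ) :
    ∑ a : G, Nat.card {x : G // x ^ 2 = a ^ 2} ^ d
      = ∑ h : G, Nat.card {x : G // x ^ 2 = h} ^ (d + 1) := by
  classical
  rw [← Finset.sum_fiberwise_of_maps_to (g := fun a : G => a ^ 2)
    (t := Finset.univ) (fun a _ => Finset.mem_univ _)
    (fun a => Nat.card {x : G // x ^ 2 = a ^ 2} ^ d)]
  refine Finset.sum_congr rfl fun h _ => ?_
  have : ∀ a ∈ Finset.univ.filter (fun a : G => a ^ 2 = h),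
      Nat.card {x : G // x ^ 2 = a ^ 2} ^ d = Nat.card {x : G // x ^ 2 = h} ^ d := by
    intro a ha
    rw [(Finset.mem_filter.mp ha).2]
  rw [Finset.sum_congr rfl this, Finset.sum_const, smul_eq_mul, pow_succ']
  congr 1
  rw [Nat.card_eq_fintype_card, Fintype.card_subtype]

/-- Equiv between the transporter set and the stabilizer. -/
def stmt11_eqvStab {A β : Type} [Group A] [MulAction A β] (x y : β) (g₀ : A)
    (h : g₀ • x = y) : {g : A // g • x = y} ≃ MulAction.stabilizer A x where
  toFun g := ⟨g₀⁻¹ * g.1, by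
    have := g.2
    rw [MulAction.mem_stabilizer_iff, mul_smul, this, ← h, inv_smul_smul]⟩
  invFun s := ⟨g₀ * s.1, by
    have := s.2
    rw [MulAction.mem_stabilizer_iff] at this
    rw [mul_smul, this, h]⟩
  left_inv g := by ext; simp
  right_inv s := by ext; simp

end More

section OrbitSide
variable {G : Type} [Group G] [Fintype G]

lemma stmt11_orbit_side (d : ℕ) :
    (∑ x : Fin d → G, (Nat.card {g : ConjAct G // g • x = fun i => (x i)⁻¹} : ℚ))
      = (Fintype.card G : ℚ) *
        Nat.card {c : MulAction.orbitRel.Quotient (ConjAct G) (Fin d → G) //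
          ∀ x : Fin d → G,
            Quotient.mk (MulAction.orbitRel (ConjAct G) (Fin d → G)) x = c →
              Quotient.mk (MulAction.orbitRel (ConjAct G) (Fin d → G))
                (fun i => (x i)⁻¹) = c} := by
  classical
  set S := MulAction.orbitRel (ConjAct G) (Fin d → G) with hS
  have key : ∀ c : Quotient S,
      (∑ x ∈ Finset.univ.filter (fun x : Fin d → G => Quotient.mk S x = c),
        (Nat.card {g : ConjAct G // g • x = fun i => (x i)⁻¹} : ℚ))
      = if (∀ x : Fin d → G, Quotient.mk S x = c → Quotient.mk S (fun i => (x i)⁻¹) = c)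
        then (Fintype.card G : ℚ) else 0 := by
    intro c
    by_cases hc : ∀ x : Fin d → G, Quotient.mk S x = c → Quotient.mk S (fun i => (x i)⁻¹) = c
    · rw [if_pos hc]
      obtain ⟨x₀, hx₀⟩ := Quotient.exists_rep c
      have hmem : ∀ y : Fin d → G,
          (Quotient.mk S y = c ↔ y ∈ MulAction.orbit (ConjAct G) x₀) := by
        intro y
        rw [← hx₀, Quotient.eq]
        exact MulAction.orbitRel_apply
      set n := (Finset.univ.filter (fun x : Fin d → G => Quotient.mk S x = c)).card with hn
      have hncard : n = Fintype.card (MulAction.orbit (ConjAct G) x₀) := by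
        rw [hn, Fintype.card_subtype]
        congr 1
        ext y
        simp [hmem y]
      have hnpos : 0 < n := by
        rw [hn]
        apply Finset.card_pos.mpr
        exact ⟨x₀, Finset.mem_filter.mpr ⟨Finset.mem_univ _, hx₀⟩⟩
      have hterm : ∀ x ∈ Finset.univ.filter (fun x : Fin d → G => Quotient.mk S x = c),
          (Nat.card {g : ConjAct G // g • x = fun i => (x i)⁻¹} : ℚ)
            = (Fintype.card G : ℚ) / n := by
        intro x hx
        have hxc : Quotient.mk S x = c := (Finset.mem_filter.mp hx).2
        have h1 : (fun i => (x i)⁻¹) ∈ MulAction.orbit (ConjAct G) x := by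
          have h2 := hc x hxc
          rw [← hxc, Quotient.eq] at h2
          exact MulAction.orbitRel_apply.mp h2
        obtain ⟨g₀, hg₀⟩ := h1
        rw [Nat.card_congr (stmt11_eqvStab x _ g₀ hg₀)]
        have horb : Fintype.card (MulAction.orbit (ConjAct G) x)
            = Fintype.card (MulAction.orbit (ConjAct G) x₀) := by
          apply Fintype.card_congr
          apply Equiv.setCongr
          rw [MulAction.orbit_eq_iff]
          exact (hmem x).mp hxc
        have hos := MulAction.card_orbit_mul_card_stabilizer_eq_card_group (ConjAct G) x
        have hcardA : Fintype.card (ConjAct G) = Fintype.card G :=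
          Fintype.card_congr ConjAct.ofConjAct.toEquiv
        rw [horb, hcardA, ← hncard] at hos
        rw [Nat.card_eq_fintype_card,
          eq_div_iff (by exact_mod_cast hnpos.ne' : (n : ℚ) ≠ 0), mul_comm]
        exact_mod_cast hos
      rw [Finset.sum_congr rfl hterm, Finset.sum_const, nsmul_eq_mul, ← hn]
      rw [mul_div_cancel₀]
      exact_mod_cast hnpos.ne'
    · rw [if_neg hc]
      refine Finset.sum_eq_zero fun x hx => ?_
      push_neg at hc
      obtain ⟨x₁, hx₁c, hx₁⟩ := hc
      have hxc : Quotient.mk S x = c := (Finset.mem_filter.mp hx).2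
      have hempty : IsEmpty {g : ConjAct G // g • x = fun i => (x i)⁻¹} := by
        constructor
        rintro ⟨g, hg⟩
        apply hx₁
        have h1 : Quotient.mk S (fun i => (x i)⁻¹) = c := by
          rw [← hxc, Quotient.eq]
          exact MulAction.orbitRel_apply.mpr ⟨g, hg⟩
        have h2 : x ∈ MulAction.orbit (ConjAct G) x₁ :=
          MulAction.orbitRel_apply.mp (Quotient.eq.mp (hxc.trans hx₁c.symm))
        obtain ⟨h, hh⟩ := h2
        have h3 : (fun i => (x i)⁻¹) ∈ MulAction.orbit (ConjAct G) (fun i => (x₁ i)⁻¹) := by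
          refine ⟨h, funext fun i => ?_⟩
          have : x i = h • x₁ i := by rw [← hh]; rfl
          rw [this]
          simp [ConjAct.smul_def, mul_inv_rev, mul_assoc]
        rw [← h1, Quotient.eq]
        exact MulAction.orbitRel_apply.mpr (MulAction.mem_orbit_symm.mp h3)
      rw [@Nat.card_of_isEmpty _ hempty]
      norm_num
  rw [← Finset.sum_fiberwise Finset.univ (fun x : Fin d → G => Quotient.mk S x)
    (fun x => (Nat.card {g : ConjAct G // g • x = fun i => (x i)⁻¹} : ℚ))]
  rw [Finset.sum_congr rfl (fun c _ => key c)]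
  rw [← Finset.sum_filter, Finset.sum_const, nsmul_eq_mul, Nat.card_eq_fintype_card,
    Fintype.card_subtype, mul_comm]

end OrbitSide

/-- The number of real simultaneous conjugacy classes in `G^d` equals
`(1/|G|) ∑_{g ∈ G} r(g)^{d+1}`, where `r(g) = #{x ∈ G : x² = g}` is the number of
square roots of `g` in `G`. -/
theorem stmt_11 {G : Type} [Group G] [Fintype G] (d : ℕ) (hd : 0 < d) :
    (Nat.card {c : MulAction.orbitRel.Quotient (ConjAct G) (Fin d → G) //
        ∀ x : Fin d → G,
          Quotient.mk (MulAction.orbitRel (ConjAct G) (Fin d → G)) x = c →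
            Quotient.mk (MulAction.orbitRel (ConjAct G) (Fin d → G))
              (fun i => (x i)⁻¹) = c} : ℚ)
      = (Fintype.card G : ℚ)⁻¹ *
          ∑ g : G, (Nat.card {x : G // x ^ 2 = g} : ℚ) ^ (d + 1) := by
  classical
  have h2 : ∑ x : Fin d → G, Nat.card {g : ConjAct G // g • x = fun i => (x i)⁻¹}
      = ∑ h : G, Nat.card {x : G // x ^ 2 = h} ^ (d + 1) := by
    rw [stmt11_sum_card_swap (fun (g : ConjAct G) (x : Fin d → G) => g • x = fun i => (x i)⁻¹)]
    rw [← Fintype.sum_equiv (ConjAct.toConjAct.toEquiv : G ≃ ConjAct G)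
      (fun a => Nat.card {x : Fin d → G // (ConjAct.toConjAct a) • x = fun i => (x i)⁻¹})
      (fun g => Nat.card {x : Fin d → G // g • x = fun i => (x i)⁻¹}) (fun a => rfl)]
    rw [Finset.sum_congr rfl (fun a _ => stmt11_card_fixed d a), stmt11_sum_sq d]
  have hG0 : (Fintype.card G : ℚ) ≠ 0 := by exact_mod_cast Fintype.card_ne_zero
  rw [inv_mul_eq_div, eq_div_iff hG0, mul_comm]
  rw [← stmt11_orbit_side d, ← Nat.cast_sum, h2]
  push_cast
  rfl
end

section
/- Let G be a finite group. If G is 3-real, i.e. for every triple (g₁,g₂,g₃) ∈ G³ there exists g ∈ G with gg_ig⁻¹ = g_i⁻¹ for i = 1,2,3, then G is an elementary Abelian 2-group: G is Abelian and every element of G has order dividing 2. -/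
/-- If a finite group `G` is `3`-real, i.e. every triple of elements is simultaneously
conjugate to its componentwise inverse, then `G` is an elementary Abelian `2`-group. -/
theorem stmt_12 {G : Type} [Group G] [Finite G]
    (h : ∀ g₁ g₂ g₃ : G, ∃ g : G,
      g * g₁ * g⁻¹ = g₁⁻¹ ∧ g * g₂ * g⁻¹ = g₂⁻¹ ∧ g * g₃ * g⁻¹ = g₃⁻¹) :
    (∀ a b : G, a * b = b * a) ∧ ∀ a : G, orderOf a ∣ 2 := by
  have comm : ∀ a b : G, a * b = b * a := by
    intro a b
    obtain ⟨g, ha, hb, hab⟩ := h a b (a * b)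
    have : a⁻¹ * b⁻¹ = (a * b)⁻¹ := by
      calc a⁻¹ * b⁻¹ = (g * a * g⁻¹) * (g * b * g⁻¹) := by rw [ha, hb]
        _ = g * (a * b) * g⁻¹ := by group
        _ = (a * b)⁻¹ := hab
    rw [mul_inv_rev] at this
    have h2 := congrArg (fun x => x⁻¹) this
    simpa [mul_inv_rev] using h2.symm
  refine ⟨comm, fun a => ?_⟩
  obtain ⟨g, ha, -, -⟩ := h a a a
  have : a = a⁻¹ := by
    rw [← ha, comm g a, mul_assoc, mul_inv_cancel, mul_one]
  exact orderOf_dvd_of_pow_eq_one (by rw [pow_two]; nth_rewrite 1 [this]; exact inv_mul_cancel a)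
end

section
/- Let A be an Abelian group and let D(A) = A ⋊ C₂ be the generalized dihedral group of A, where the nontrivial element s of the cyclic group C₂ of order 2 acts on A by s·a = a⁻¹. Then D(A) is doubly real: for every pair (u,v) ∈ D(A)² there exists g ∈ D(A) with gug⁻¹ = u⁻¹ and gvg⁻¹ = v⁻¹. -/
/-- The action of the cyclic group `C₂` (realized as `Multiplicative (ZMod 2)`)
on an Abelian group `A`, where the nontrivial element acts by inversion `a ↦ a⁻¹`. -/
def dihedralPhi (A : Type) [CommGroup A] : Multiplicative (ZMod 2) →* MulAut A where
  toFun x := MulEquiv.inv A ^ (Multiplicative.toAdd x).val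
  map_one' := by simp
  map_mul' x y := by
    have h2 : MulEquiv.inv A ^ (2 : ℕ) = 1 := by
      ext a
      simp [pow_succ]
    show MulEquiv.inv A ^ (Multiplicative.toAdd (x * y)).val =
      MulEquiv.inv A ^ (Multiplicative.toAdd x).val *
        MulEquiv.inv A ^ (Multiplicative.toAdd y).val
    rw [toAdd_mul, ZMod.val_add, ← pow_eq_pow_mod _ h2, pow_add]

/-- The generalized dihedral group `D(A) = A ⋊ C₂`, where the nontrivial element of
`C₂` acts on the Abelian group `A` by inversion. -/
abbrev genDihedral (A : Type) [CommGroup A] :=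
  SemidirectProduct A (Multiplicative (ZMod 2)) (dihedralPhi A)


lemma phi_one (A : Type) [CommGroup A] (a : A) :
    dihedralPhi A 1 a = a := by simp

lemma phi_s (A : Type) [CommGroup A] (a : A) :
    dihedralPhi A (Multiplicative.ofAdd 1) a = a⁻¹ := by
  show (MulEquiv.inv A ^ (Multiplicative.toAdd (Multiplicative.ofAdd (1 : ZMod 2))).val) a = a⁻¹
  simp [ZMod.val_one]

/-- The generalized dihedral group `D(A)` of an Abelian group `A` is doubly real:
every pair of elements is simultaneously conjugate to its pair of inverses. -/
theorem stmt_15 (A : Type) [CommGroup A] :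
    ∀ u v : genDihedral A, ∃ g : genDihedral A,
      g * u * g⁻¹ = u⁻¹ ∧ g * v * g⁻¹ = v⁻¹ := by
  have hcases : ∀ x : Multiplicative (ZMod 2), x = 1 ∨ x = Multiplicative.ofAdd 1 := by decide
  have hsinv : (Multiplicative.ofAdd (1 : ZMod 2))⁻¹ = Multiplicative.ofAdd 1 := by decide
  have hss : (Multiplicative.ofAdd (1 : ZMod 2)) * Multiplicative.ofAdd 1 = 1 := by decide
  rintro ⟨a, x⟩ ⟨b, y⟩
  rcases hcases x with rfl | rfl <;> rcases hcases y with rfl | rfl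
  · -- both translations: conjugate by s
    refine ⟨⟨1, Multiplicative.ofAdd 1⟩, ?_, ?_⟩ <;>
      ext <;>
      simp [SemidirectProduct.mul_left, SemidirectProduct.mul_right,
        SemidirectProduct.inv_left, SemidirectProduct.inv_right, hsinv, hss, phi_one, phi_s]
  · -- u translation, v reflection: g = v
    refine ⟨⟨b, Multiplicative.ofAdd 1⟩, ?_, ?_⟩ <;>
      ext <;>
      simp [SemidirectProduct.mul_left, SemidirectProduct.mul_right,
        SemidirectProduct.inv_left, SemidirectProduct.inv_right, hsinv, hss, phi_one, phi_s, mul_comm]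
  · -- u reflection, v translation: g = u
    refine ⟨⟨a, Multiplicative.ofAdd 1⟩, ?_, ?_⟩ <;>
      ext <;>
      simp [SemidirectProduct.mul_left, SemidirectProduct.mul_right,
        SemidirectProduct.inv_left, SemidirectProduct.inv_right, hsinv, hss, phi_one, phi_s, mul_comm]
  · -- both reflections: g = 1
    refine ⟨1, ?_, ?_⟩ <;>
      ext <;>
      simp [SemidirectProduct.mul_left, SemidirectProduct.mul_right,
        SemidirectProduct.inv_left, SemidirectProduct.inv_right, hsinv, hss, phi_one, phi_s]
end
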